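/- Let s₀ ∈ ℝ, ε > 0 and s ∈ ℝ. Let (I_i)_{i∈B} be an infinite family of bars I_i = (a_i, b_i] (with a_i ∈ ℝ, b_i ∈ ℝ ∪ {+∞}) such that s₀ ≤ a_i < s and b_i − a_i > ε for every i ∈ B. Then there exist real numbers t' < t such that the set {i ∈ B : a_i < t' and t ≤ b_i} (i.e., the set of indices i with [t', t] ⊆ I_i) is infinite. -/
import Mathlib

/-- Given an infinite family of bars `(a i, b i]` (with `b i ∈ ℝ ∪ {+∞}`)
all beginning in `[s₀, s)` and all of length greater than `ε`, there exist real numbers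
`t' < t` such that infinitely many of the bars contain the segment `[t', t]`,
i.e. `a i < t'` and `t ≤ b i` for infinitely many `i`. -/
theorem stmt_0 {B : Type*} [Infinite B] (s₀ ε s : ℝ) (hε : 0 < ε)
    (a : B → ℝ) (b : B → EReal)
    (hlb : ∀ i, s₀ ≤ a i) (hub : ∀ i, a i < s)
    (hlen : ∀ i, (ε : EReal) < b i - (a i : EReal)) :
    ∃ t' t : ℝ, t' < t ∧ {i : B | a i < t' ∧ (t : EReal) ≤ b i}.Infinite := by
  have hδ0 : 0 < ε / 2 := by positivity
  set N : ℕ := ⌈(s - s₀) / (ε / 2)⌉₊ + 1 with hN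
  have hf : ∀ i, (⌊(a i - s₀) / (ε / 2)⌋).toNat < N := by
    intro i
    have h1 : (a i - s₀) / (ε / 2) < (N : ℝ) := by
      have h2 : (a i - s₀) / (ε / 2) < (s - s₀) / (ε / 2) := by
        apply div_lt_div_of_pos_right _ hδ0
        linarith [hub i]
      have h3 : (s - s₀) / (ε / 2) ≤ (⌈(s - s₀) / (ε / 2)⌉₊ : ℝ) := Nat.le_ceil _
      have : ((⌈(s - s₀) / (ε / 2)⌉₊ : ℝ)) ≤ (N : ℝ) := by
        rw [hN]; push_cast; linarith
      linarith
    have h4 : ⌊(a i - s₀) / (ε / 2)⌋ < (N : ℤ) := by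
      rw [Int.floor_lt]; exact_mod_cast h1
    omega
  obtain ⟨k, hk⟩ := Finite.exists_infinite_fiber (fun i => (⟨_, hf i⟩ : Fin N))
  rw [Set.infinite_coe_iff] at hk
  set c : ℝ := s₀ + (k : ℕ) * (ε / 2) with hc
  refine ⟨c + ε / 2, c + ε, by linarith, hk.mono ?_⟩
  intro i hi
  simp only [Set.mem_preimage, Set.mem_singleton_iff] at hi
  have hi' : (⌊(a i - s₀) / (ε / 2)⌋).toNat = (k : ℕ) := congrArg Fin.val hi
  have hnn : (0:ℤ) ≤ ⌊(a i - s₀) / (ε / 2)⌋ := by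
    exact Int.floor_nonneg.2 (div_nonneg (by linarith [hlb i]) hδ0.le)
  have hfl : ⌊(a i - s₀) / (ε / 2)⌋ = (k : ℤ) := by omega
  have h5 : ((k : ℕ) : ℝ) ≤ (a i - s₀) / (ε / 2) := by
    have := Int.floor_le ((a i - s₀) / (ε / 2))
    rw [hfl] at this; exact_mod_cast this
  have h6 : (a i - s₀) / (ε / 2) < (k : ℕ) + 1 := by
    have := Int.lt_floor_add_one ((a i - s₀) / (ε / 2))
    rw [hfl] at this; exact_mod_cast this
  have hca : c ≤ a i := by
    rw [hc]
    have := (le_div_iff₀ hδ0).1 h5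
    linarith
  have hac : a i < c + ε / 2 := by
    rw [hc]
    have := (div_lt_iff₀ hδ0).1 h6
    linarith
  refine ⟨hac, ?_⟩
  have hblt : ((a i + ε : ℝ) : EReal) < b i := by
    have := hlen i
    rw [EReal.lt_sub_iff_add_lt (.inl (EReal.coe_ne_bot _)) (.inl (EReal.coe_ne_top _))] at this
    rw [show ((a i + ε : ℝ) : EReal) = (ε : EReal) + (a i : EReal) by
      push_cast; exact add_comm _ _]
    exact this
  refine le_trans ?_ hblt.le
  exact_mod_cast (by linarith : c + ε ≤ a i + ε)
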